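/- Let μ be a Z^2-invariant ergodic Borel probability measure on X. Then μ(E) = 0, where E is the set of points of Y extremal in their σ-component. -/

import Mathlib

open MeasureTheory Filter

/-- Configurations: `ℤ²`-indexed families of elements of `ℤ/2ℤ`. -/
abbrev Config := ℤ → ℤ → ZMod 2

/-- The three-dot relation. -/
def threeDot (x : Config) : Prop :=
  ∀ k l : ℤ, x k l + x (k + 1) l + x k (l + 1) = 0

/-- The three-dot system `X`. -/
def Xset : Set Config := {x | threeDot x}

/-- The `ℤ²`-shift action: `shift k l x = T^k S^l x`. -/
def shift (k l : ℤ) (x : Config) : Config := fun a b => x (a + k) (b + l)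

/-- The shift `T`. -/
def Tm : Config → Config := shift 1 0

/-- The shift `S`. -/
def Sm : Config → Config := shift 0 1

/-- `Y` : points of `X` with coordinate `1` at the origin. -/
def Yset : Set Config := {x | threeDot x ∧ x 0 0 = 1}

/-- The map `σ : Y → Y`, extended to all configurations:
it equals `Tx` if `Tx` has a `1` at the origin, and `Sx` otherwise. -/
def sig (x : Config) : Config := if x 1 0 = 1 then Tm x else Sm x

/-- `Z` : points of `Y` with σ-antecedents of every depth (equivalently,
infinitely many σ-antecedents). -/
def Zset : Set Config := {x | x ∈ Yset ∧ ∀ n : ℕ, ∃ y ∈ Yset, sig^[n] y = x}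

/-- `Z₂` : points of `Z` having two distinct σ-preimages in `Z`. -/
def Z2set : Set Config :=
  {x | x ∈ Zset ∧ ∃ y z, y ≠ z ∧ y ∈ Zset ∧ z ∈ Zset ∧ sig y = x ∧ sig z = x}

/-- The σ-component of a point `x` of `Y`: points of the `ℤ²`-orbit of `x`
lying in `Y` whose forward σ-trajectory meets that of `x`. -/
def sigComp (x : Config) : Set Config :=
  {y | (∃ k l : ℤ, y = shift k l x) ∧ y ∈ Yset ∧ ∃ p q : ℕ, sig^[p] x = sig^[q] y}

/-- Aperiodicity of a configuration for the `ℤ²`-action. -/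
def Aperiodic (x : Config) : Prop := ∀ k l : ℤ, shift k l x = x → k = 0 ∧ l = 0

/-- `E` : points of `Y` that are extremal in their σ-component. -/
def Eset : Set Config :=
  {x | x ∈ Yset ∧ ∀ k l : ℤ, shift k l x ∈ sigComp x → shift k l x ≠ x →
    (0 < k + l ∨ (k + l = 0 ∧ 0 ≤ l))}

open scoped ENNReal

-- basics
lemma shift_apply (k l a b : ℤ) (x : Config) : shift k l x a b = x (a + k) (b + l) := rfl

lemma shift_shift (k l k' l' : ℤ) (x : Config) :
    shift k l (shift k' l' x) = shift (k + k') (l + l') x := by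
  funext a b; simp [shift]; ring_nf

lemma shift_zero (x : Config) : shift 0 0 x = x := by funext a b; simp [shift]

lemma threeDot_shift {x : Config} (h : threeDot x) (k l : ℤ) : threeDot (shift k l x) := by
  intro a b
  have := h (a + k) (b + l)
  simpa [shift, add_right_comm, add_assoc] using this

-- ZMod 2 helpers
lemma zmod2_cases : ∀ a : ZMod 2, a = 0 ∨ a = 1 := by decide

lemma zmod2_add_self : ∀ a : ZMod 2, a + a = 0 := by decide

lemma zmod2_solve : ∀ a b c : ZMod 2, a + b + c = 0 → c = a + b := by decide

lemma threeDot_step {x : Config} (h : threeDot x) (k l : ℤ) :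
    x k (l + 1) = x k l + x (k + 1) l :=
  zmod2_solve _ _ _ (h k l)

lemma threeDot_step' {x : Config} (h : threeDot x) (k l : ℤ) :
    x (k + 1) l = x k l + x k (l + 1) := by
  have h1 := h k l
  revert h1
  generalize x k l = a; generalize x (k+1) l = b; generalize x k (l+1) = c
  revert a b c; decide

-- sig lemmas
lemma sig_eq_T {y : Config} (h : y 1 0 = 1) : sig y = shift 1 0 y := by simp [sig, h, Tm]
lemma sig_eq_S {y : Config} (h : ¬ y 1 0 = 1) : sig y = shift 0 1 y := by simp [sig, h, Sm]

lemma shift_mem_Yset {y : Config} (h3 : threeDot y) {k l : ℤ} (h1 : y k l = 1) :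
    shift k l y ∈ Yset := by
  refine ⟨threeDot_shift h3 k l, ?_⟩
  simpa [shift_apply] using h1

lemma sig_spec {y : Config} (hy : y ∈ Yset) :
    sig y ∈ Yset ∧ ((y 1 0 = 1 ∧ sig y = shift 1 0 y) ∨ (y 1 0 ≠ 1 ∧ sig y = shift 0 1 y)) := by
  obtain ⟨h3, h0⟩ := hy
  by_cases h : y 1 0 = 1
  · rw [sig_eq_T h]
    exact ⟨shift_mem_Yset h3 h, Or.inl ⟨h, rfl⟩⟩
  · have h10 : y 1 0 = 0 := (zmod2_cases (y 1 0)).resolve_right h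
    have h01 : y 0 1 = 1 := by
      have := threeDot_step h3 0 0
      norm_num [h10, h0] at this
      exact this
    rw [sig_eq_S h]
    exact ⟨shift_mem_Yset h3 h01, Or.inr ⟨h, rfl⟩⟩

lemma sig_mem_Yset {y : Config} (hy : y ∈ Yset) : sig y ∈ Yset := (sig_spec hy).1

lemma sig_shift {y : Config} (hy : y ∈ Yset) :
    ∃ a b : ℤ, 0 ≤ a ∧ 0 ≤ b ∧ a + b = 1 ∧ sig y = shift a b y := by
  rcases (sig_spec hy).2 with ⟨_, h⟩ | ⟨_, h⟩
  · exact ⟨1, 0, by norm_num, by norm_num, by norm_num, h⟩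
  · exact ⟨0, 1, by norm_num, by norm_num, by norm_num, h⟩

lemma sig_iter_shift {y : Config} (hy : y ∈ Yset) (n : ℕ) :
    sig^[n] y ∈ Yset ∧
      ∃ a b : ℤ, 0 ≤ a ∧ 0 ≤ b ∧ a + b = n ∧ sig^[n] y = shift a b y := by
  induction n with
  | zero => exact ⟨hy, 0, 0, le_refl _, le_refl _, by norm_num, (shift_zero y).symm⟩
  | succ n ih =>
    obtain ⟨hYn, a, b, ha, hb, hab, hs⟩ := ih
    obtain ⟨c, d, hc, hd, hcd, hs'⟩ := sig_shift hYn
    rw [Function.iterate_succ_apply']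
    refine ⟨sig_mem_Yset hYn, c + a, d + b, by omega, by omega, by push_cast; omega, ?_⟩
    rw [hs', hs, shift_shift]

-- periodicity lemmas
lemma per_nat_iterate {x : Config} {k l : ℤ} (h : shift k l x = x) :
    ∀ t : ℕ, shift (t * k) (t * l) x = x := by
  intro t
  induction t with
  | zero => simpa using shift_zero x
  | succ t ih =>
    have : shift ((t:ℤ) * k) ((t:ℤ) * l) (shift k l x) = x := by rw [h, ih]
    rw [shift_shift] at this
    convert this using 2 <;> push_cast <;> ring

lemma per_neg {x : Config} {k l : ℤ} (h : shift k l x = x) :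
    shift (-k) (-l) x = x := by
  conv_lhs => rw [← h, shift_shift]
  simpa using shift_zero x

lemma per_iterate {x : Config} {k l : ℤ} (h : shift k l x = x) :
    ∀ t : ℤ, shift (t * k) (t * l) x = x := by
  intro t
  rcases Int.natAbs_eq t with ht | ht
  · rw [ht]; exact_mod_cast per_nat_iterate h t.natAbs
  · rw [ht]
    have := per_nat_iterate (per_neg h) t.natAbs
    push_cast at this ⊢
    convert this using 2 <;> ring

lemma sig_ne {x : Config} (hx : x ∈ Yset) : sig x ≠ x := by
  obtain ⟨h3, h0⟩ := hx
  intro hfix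
  by_cases h : x 1 0 = 1
  · rw [sig_eq_T h] at hfix
    -- horizontal period 1 : all rows above are 0
    have hcol : ∀ k l : ℤ, x (k + 1) l = x k l := by
      intro k l; simpa [shift_apply] using congrFun (congrFun hfix k) l
    have hz : ∀ k l : ℤ, x k (l + 1) = 0 := by
      intro k l
      rw [threeDot_step h3 k l, hcol, zmod2_add_self]
    have : x 0 0 = 0 := by have := hz 0 (-1); norm_num at this; exact this
    rw [this] at h0; exact absurd h0 (by decide)
  · rw [sig_eq_S h] at hfix
    have hrow : ∀ k l : ℤ, x k (l + 1) = x k l := by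
      intro k l; simpa [shift_apply] using congrFun (congrFun hfix k) l
    have hz : ∀ k l : ℤ, x (k + 1) l = 0 := by
      intro k l
      have := threeDot_step' h3 k l
      rw [hrow] at this
      rw [this, zmod2_add_self]
    have : x 0 0 = 0 := by have := hz (-1) 0; norm_num at this; exact this
    rw [this] at h0; exact absurd h0 (by decide)

/-- a point of Y with a nontrivial period of nonzero coordinate-sum is not extremal -/
lemma not_ext_of_per {x : Config} (hx : x ∈ Yset) {k0 l0 : ℤ}
    (hper : shift k0 l0 x = x) (hsum : k0 + l0 ≠ 0) : x ∉ Eset := by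
  intro hE
  obtain ⟨a, b, _, _, hab1, hsig⟩ := sig_shift hx
  -- choose t with t * (k0 + l0) ≥ 2
  obtain ⟨t, ht⟩ : ∃ t : ℤ, 2 ≤ t * (k0 + l0) := by
    rcases lt_or_gt_of_ne hsum with h | h
    · exact ⟨-2, by nlinarith⟩
    · exact ⟨2, by nlinarith⟩
  set k := a + (-t) * k0 with hk
  set l := b + (-t) * l0 with hl
  have hshift : shift k l x = sig x := by
    have hp := per_iterate hper (-t)
    calc shift k l x = shift a b (shift ((-t) * k0) ((-t) * l0) x) := by
          rw [shift_shift, hk, hl]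
    _ = shift a b x := by rw [hp]
    _ = sig x := hsig.symm
  have hmem : shift k l x ∈ sigComp x := by
    refine ⟨⟨k, l, rfl⟩, ?_, 1, 0, ?_⟩
    · rw [hshift]; exact sig_mem_Yset hx
    · simp [hshift]
  have hne : shift k l x ≠ x := by rw [hshift]; exact sig_ne hx
  have hd := hE.2 k l hmem hne
  have hkl : k + l = a + b - t * (k0 + l0) := by rw [hk, hl]; ring
  have hkl' : k + l ≤ -1 := by rw [hkl, hab1]; linarith
  omega

-- rows and the shift operator
abbrev Row := ℤ → ZMod 2

def rowOf (x : Config) (l : ℤ) : Row := fun k => x k l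

def sigma1 : Module.End (ZMod 2) Row where
  toFun r := fun k => r (k + 1)
  map_add' := by intros; rfl
  map_smul' := by intros; rfl

lemma sigma1_pow (i : ℕ) (r : Row) (k : ℤ) : (sigma1 ^ i) r k = r (k + i) := by
  induction i generalizing r k with
  | zero => simp
  | succ i ih =>
    rw [pow_succ, Module.End.mul_apply, ih]
    show r (k + i + 1) = r (k + (i + 1 : ℕ))
    push_cast; ring_nf

lemma row_succ {x : Config} (h3 : threeDot x) (l : ℤ) :
    rowOf x (l + 1) = (1 + sigma1) (rowOf x l) := by
  funext k
  show x k (l + 1) = ((1 : Module.End (ZMod 2) Row) (rowOf x l) + sigma1 (rowOf x l)) k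
  rw [threeDot_step h3 k l]
  rfl

lemma row_add {x : Config} (h3 : threeDot x) (l : ℤ) (m : ℕ) :
    rowOf x (l + m) = ((1 + sigma1) ^ m) (rowOf x l) := by
  induction m generalizing l with
  | zero => simp [rowOf]
  | succ m ih =>
    have : l + (m + 1 : ℕ) = (l + 1) + m := by push_cast; ring
    rw [this, ih (l + 1), row_succ h3 l, pow_succ, Module.End.mul_apply]

lemma zmod2_eq_of_add : ∀ a b : ZMod 2, a + b = 0 → a = b := by decide

lemma zmod2_ne_zero : ∀ a : ZMod 2, a ≠ 0 → a = 1 := by decide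

/-- window determinism: solutions of the recurrence are determined by d consecutive values -/
lemma window_inj (c : ℕ → ZMod 2) (d : ℕ) (hd : 1 ≤ d) (hc0 : c 0 = 1) (hcd : c d = 1)
    (r s : Row)
    (hr : ∀ k : ℤ, ∑ i ∈ Finset.range (d + 1), c i * r (k + i) = 0)
    (hs : ∀ k : ℤ, ∑ i ∈ Finset.range (d + 1), c i * s (k + i) = 0)
    (hw : ∀ i : ℤ, 0 ≤ i → i < d → r i = s i) : r = s := by
  set u : Row := fun k => r k + s k with hu
  have hur : ∀ k : ℤ, ∑ i ∈ Finset.range (d + 1), c i * u (k + i) = 0 := by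
    intro k
    have : ∑ i ∈ Finset.range (d + 1), c i * u (k + i)
        = (∑ i ∈ Finset.range (d + 1), c i * r (k + i))
          + ∑ i ∈ Finset.range (d + 1), c i * s (k + i) := by
      rw [← Finset.sum_add_distrib]
      exact Finset.sum_congr rfl fun i _ => by simp [hu]; ring
    rw [this, hr, hs, add_zero]
  have hw0 : ∀ i : ℤ, 0 ≤ i → i < d → u i = 0 := by
    intro i h1 h2
    simp only [hu]
    rw [hw i h1 h2, zmod2_add_self]
  have main : ∀ n : ℕ, ∀ k : ℤ, -(n : ℤ) ≤ k → k < d + n → u k = 0 := by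
    intro n
    induction n with
    | zero => intro k h1 h2; exact hw0 k (by omega) (by omega)
    | succ n ih =>
      intro k h1 h2
      by_cases hin : -(n : ℤ) ≤ k ∧ k < d + n
      · exact ih k hin.1 hin.2
      · rcases (by push_cast at h1 h2 ⊢; omega :
          k = -((n : ℤ) + 1) ∨ k = (d : ℤ) + n) with hk | hk
        · -- leftmost: use relation at k, peel i = 0
          have hrel := hur k
          rw [Finset.sum_range_succ'] at hrel
          have hz : ∀ i ∈ Finset.range d, c (i + 1) * u (k + (i + 1 : ℕ)) = 0 := by
            intro i hi
            simp only [Finset.mem_range] at hi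
            have : u (k + (i + 1 : ℕ)) = 0 := by
              apply ih
              · push_cast; omega
              · push_cast; omega
            rw [this, mul_zero]
          rw [Finset.sum_eq_zero hz, zero_add] at hrel
          have : u k = 0 := by
            have : c 0 * u (k + (0 : ℕ)) = 0 := hrel
            rw [hc0, one_mul] at this
            simpa using this
          exact this
        · -- rightmost: use relation at n, peel i = d
          have hrel := hur (n : ℤ)
          rw [Finset.sum_range_succ] at hrel
          have hz : ∀ i ∈ Finset.range d, c i * u ((n : ℤ) + i) = 0 := by
            intro i hi
            simp only [Finset.mem_range] at hi
            have : u ((n : ℤ) + i) = 0 := by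
              apply ih
              · push_cast; omega
              · push_cast; omega
            rw [this, mul_zero]
          rw [Finset.sum_eq_zero hz, zero_add, hcd, one_mul] at hrel
          rw [hk]
          rw [show (d : ℤ) + n = (n : ℤ) + d by ring]
          exact hrel
  have huz : ∀ k : ℤ, u k = 0 := by
    intro k
    exact main (k.natAbs + 1) k (by omega) (by omega)
  funext k
  exact zmod2_eq_of_add _ _ (huz k)

lemma V_finite (c : ℕ → ZMod 2) (d : ℕ) (hd : 1 ≤ d) (hc0 : c 0 = 1) (hcd : c d = 1) :
    {r : Row | ∀ k : ℤ, ∑ i ∈ Finset.range (d + 1), c i * r (k + i) = 0}.Finite := by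
  set V := {r : Row | ∀ k : ℤ, ∑ i ∈ Finset.range (d + 1), c i * r (k + i) = 0} with hV
  have hinj : Set.InjOn (fun r : Row => fun i : Fin d => r ((i : ℕ) : ℤ)) V := by
    intro r hr s hs heq
    apply window_inj c d hd hc0 hcd r s hr hs
    intro i h1 h2
    have : i = ((⟨i.toNat, by omega⟩ : Fin d) : ℕ) := by simp; omega
    rw [this]
    exact congrFun heq ⟨i.toNat, by omega⟩
  exact Set.Finite.of_finite_image (Set.toFinite _) hinj

set_option synthInstance.maxHeartbeats 1000000 in
set_option maxHeartbeats 1000000 in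
open Polynomial in
lemma horiz_period {x : Config} (h3 : threeDot x) (h0 : x 0 0 = 1)
    {k0 : ℤ} (hk0 : 0 < k0) (hper : shift k0 (-k0) x = x) :
    ∃ M : ℤ, 0 < M ∧ shift M 0 x = x := by
  classical
  set K : ℕ := k0.toNat with hKdef
  have hK : (K : ℤ) = k0 := Int.toNat_of_nonneg hk0.le
  have hK1 : 1 ≤ K := by omega
  set Q : Polynomial (ZMod 2) := (1 + X) ^ K + X ^ K with hQdef
  set d : ℕ := Q.natDegree with hddef
  -- coefficient facts
  have hc0 : Q.coeff 0 = 1 := by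
    rw [hQdef]
    rw [Polynomial.coeff_add, Polynomial.coeff_zero_eq_eval_zero,
      Polynomial.coeff_zero_eq_eval_zero]
    simp [zero_pow (by omega : K ≠ 0)]
  have hQ0 : Q ≠ 0 := by
    intro h; rw [h] at hc0; simp at hc0
  -- the diagonal period identity
  have hdiag : ∀ k l : ℤ, x (k + K) l = x k (l + K) := by
    intro k l
    have := congrFun (congrFun hper k) (l + K)
    simp only [shift_apply] at this
    rw [hK] at this ⊢
    rw [← this]; ring_nf
  -- rows are killed by aeval sigma1 Q
  have hkill : ∀ l : ℤ, (Polynomial.aeval sigma1 Q) (rowOf x l) = 0 := by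
    intro l
    have he : (Polynomial.aeval sigma1 Q) = (1 + sigma1) ^ K + sigma1 ^ K := by
      rw [hQdef]; simp [map_add, map_pow]
    rw [he]
    have h1 : ((1 + sigma1) ^ K) (rowOf x l) = rowOf x (l + K) := (row_add h3 l K).symm
    have h2 : (sigma1 ^ K) (rowOf x l) = rowOf x (l + K) := by
      funext k
      rw [sigma1_pow]
      exact hdiag k l
    rw [LinearMap.add_apply, h1, h2]
    funext k
    show rowOf x (l + K) k + rowOf x (l + K) k = (0 : Row) k
    rw [zmod2_add_self]; rfl
  -- the scalar recurrence for every row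
  have hrel : ∀ l k : ℤ, ∑ i ∈ Finset.range (d + 1), Q.coeff i * x (k + i) l = 0 := by
    intro l k
    have h1 := hkill l
    rw [Polynomial.aeval_eq_sum_range] at h1
    have h2 := congrFun h1 k
    rw [LinearMap.sum_apply, Finset.sum_apply] at h2
    simp only [LinearMap.smul_apply, Pi.zero_apply] at h2
    calc ∑ i ∈ Finset.range (d + 1), Q.coeff i * x (k + ↑i) l
        = ∑ i ∈ Finset.range (d + 1), (Q.coeff i • (sigma1 ^ i) (rowOf x l)) k := by
          refine Finset.sum_congr rfl fun i _ => ?_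
          rw [Pi.smul_apply, smul_eq_mul, sigma1_pow]
          rfl
    _ = 0 := h2
  -- rule out degree 0
  rcases Nat.eq_zero_or_pos d with hd0 | hdpos
  · exfalso
    have := hrel 0 0
    rw [hd0] at this
    simp [hc0] at this
    rw [this] at h0
    exact absurd h0 (by decide)
  -- leading coefficient is 1
  have hcd : Q.coeff d = 1 := by
    apply zmod2_ne_zero
    exact Polynomial.leadingCoeff_ne_zero.mpr hQ0
  -- the solution space is finite
  have hVfin := V_finite Q.coeff d hdpos hc0 hcd
  set V := {r : Row | ∀ k : ℤ, ∑ i ∈ Finset.range (d + 1), Q.coeff i * r (k + i) = 0} with hVdef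
  have hrowV : ∀ l : ℤ, rowOf x l ∈ V := by
    intro l k
    exact hrel l k
  -- forward determinism of rows
  have hdet : ∀ (t : ℕ) (l l' : ℤ), rowOf x l = rowOf x l' →
      rowOf x (l + t) = rowOf x (l' + t) := by
    intro t
    induction t with
    | zero => intro l l' h; simpa using h
    | succ t ih =>
      intro l l' h
      have h1 : rowOf x (l + 1) = rowOf x (l' + 1) := by
        rw [row_succ h3 l, row_succ h3 l', h]
      have := ih (l + 1) (l' + 1) h1
      convert this using 2 <;> push_cast <;> ring
  -- pigeonhole: eventual periodicity with uniform period B!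
  haveI : Fintype V := hVfin.fintype
  set B : ℕ := Fintype.card V with hBdef
  set P : ℕ := B.factorial with hPdef
  have hP1 : 1 ≤ P := Nat.one_le_iff_ne_zero.mpr (Nat.factorial_ne_zero B)
  have hvert : ∀ l : ℤ, rowOf x (l + P) = rowOf x l := by
    intro l0
    set a : ℤ := l0 - (B + 1) with hadef
    -- pigeonhole on rowOf x (a + i), i = 0..B
    obtain ⟨i, j, hij, hfij⟩ : ∃ i j : Fin (B + 1), i ≠ j ∧
        rowOf x (a + i) = rowOf x (a + j) := by
      have hcard : Fintype.card V < Fintype.card (Fin (B + 1)) := by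
        simp [hBdef]
      obtain ⟨i, j, hij, h⟩ := Fintype.exists_ne_map_eq_of_card_lt
        (fun i : Fin (B + 1) => (⟨rowOf x (a + i), hrowV _⟩ : V)) hcard
      exact ⟨i, j, hij, by simpa using congrArg Subtype.val h⟩
    -- wlog i < j
    wlog hlt : (i : ℕ) < (j : ℕ) generalizing i j
    · exact this j i hij.symm hfij.symm (by omega)
    set p : ℕ := (j : ℕ) - (i : ℕ) with hpdef
    have hp1 : 1 ≤ p := by omega
    have hpB : p ≤ B := by omega
    -- tail periodicity from a + i
    have htail : ∀ l : ℤ, a + i ≤ l → rowOf x (l + p) = rowOf x l := by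
      intro l hl
      obtain ⟨t, ht⟩ : ∃ t : ℕ, l = a + i + t := ⟨(l - (a + i)).toNat, by omega⟩
      have := hdet t (a + j) (a + i) hfij.symm
      have e1 : a + (j : ℕ) + t = l + p := by omega
      have e2 : a + (i : ℕ) + t = l := by omega
      rw [e1, e2] at this
      exact this
    -- iterate p-periods to get P
    obtain ⟨s, hs⟩ : ∃ s : ℕ, P = p * s := ⟨P / p, by
      rw [Nat.mul_div_cancel' (Nat.dvd_factorial hp1 hpB)]⟩
    have hiter : ∀ s' : ℕ, rowOf x (l0 + p * s') = rowOf x l0 := by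
      intro s'
      induction s' with
      | zero => simp
      | succ s' ih =>
        have hstep := htail (l0 + p * s') (by
          have : (0:ℤ) ≤ (p:ℤ) * s' := by positivity
          omega)
        calc rowOf x (l0 + p * (s' + 1 : ℕ)) = rowOf x (l0 + p * s' + p) := by
              congr 1; push_cast; ring
        _ = rowOf x (l0 + p * s') := hstep
        _ = rowOf x l0 := ih
    have hPe : ((P : ℕ) : ℤ) = (p : ℤ) * (s : ℤ) := by exact_mod_cast congrArg (Nat.cast : ℕ → ℤ) hs
    rw [hPe]
    exact hiter s
  -- vertical period P
  have hvshift : shift 0 (P : ℤ) x = x := by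
    funext a b
    rw [shift_apply]
    have := congrFun (hvert b) a
    simpa [rowOf] using this
  -- horizontal period k0 * P
  refine ⟨(P : ℤ) * k0, by positivity, ?_⟩
  have hdiagP : shift ((P : ℤ) * k0) ((P : ℤ) * -k0) x = x := per_iterate hper P
  have hvP : shift 0 ((P : ℤ) * k0) x = x := by
    have := per_iterate hvshift k0
    simpa [mul_comm] using this
  calc shift ((P : ℤ) * k0) 0 x
      = shift 0 ((P : ℤ) * k0) (shift ((P : ℤ) * k0) ((P : ℤ) * -k0) x) := by
        rw [shift_shift]; congr 1 <;> ring
  _ = shift 0 ((P : ℤ) * k0) x := by rw [hdiagP]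
  _ = x := hvP

lemma eset_aperiodic {x : Config} (hE : x ∈ Eset) : Aperiodic x := by
  intro k l hkl
  by_contra hne0
  have hY : x ∈ Yset := hE.1
  rcases eq_or_ne (k + l) 0 with hsum | hsum
  · -- sum-zero period : k ≠ 0, l = -k
    have hk : k ≠ 0 := by
      intro h; apply hne0; constructor <;> omega
    obtain ⟨k0, hk0pos, hper⟩ : ∃ k0 : ℤ, 0 < k0 ∧ shift k0 (-k0) x = x := by
      rcases hk.lt_or_gt with h | h
      · refine ⟨-k, by omega, ?_⟩
        have := per_neg hkl
        rw [show -l = -(-k) by omega] at this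
        exact this
      · refine ⟨k, h, ?_⟩
        rw [show -k = l by omega]
        exact hkl
    obtain ⟨M, hM, hperM⟩ := horiz_period hY.1 hY.2 hk0pos hper
    exact not_ext_of_per hY hperM (by omega) hE
  · exact not_ext_of_per hY hkl hsum hE

-- measurability
lemma measurable_eval (k l : ℤ) : Measurable fun x : Config => x k l :=
  (measurable_pi_apply l).comp (measurable_pi_apply k)

lemma measurableSet_coord (k l : ℤ) (c : ZMod 2) : MeasurableSet {x : Config | x k l = c} :=
  measurable_eval k l (MeasurableSet.singleton c)

lemma measurable_shift (k l : ℤ) : Measurable (shift k l) := by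
  apply measurable_pi_lambda
  intro a
  apply measurable_pi_lambda
  intro b
  exact measurable_eval (a + k) (b + l)

lemma measurable_sig : Measurable sig := by
  unfold sig
  apply Measurable.ite
  · exact measurableSet_coord 1 0 1
  · exact measurable_shift 1 0
  · exact measurable_shift 0 1

lemma measurableSet_eqfun {f g : Config → Config} (hf : Measurable f) (hg : Measurable g) :
    MeasurableSet {x : Config | f x = g x} := by
  have : {x : Config | f x = g x} = ⋂ (k : ℤ) (l : ℤ) , ⋃ (c : ZMod 2),
      {x | f x k l = c} ∩ {x | g x k l = c} := by
    ext x
    simp only [Set.mem_setOf_eq, Set.mem_iInter, Set.mem_iUnion, Set.mem_inter_iff]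
    constructor
    · intro h k l; exact ⟨f x k l, rfl, by rw [h]⟩
    · intro h
      funext k l
      obtain ⟨c, h1, h2⟩ := h k l
      rw [h1, h2]
  rw [this]
  apply MeasurableSet.iInter; intro k
  apply MeasurableSet.iInter; intro l
  apply MeasurableSet.iUnion; intro c
  exact (((measurable_eval k l).comp hf) (MeasurableSet.singleton c)).inter
    (((measurable_eval k l).comp hg) (MeasurableSet.singleton c))

lemma measurableSet_Yset : MeasurableSet Yset := by
  have : Yset = (⋂ (k : ℤ) (l : ℤ),
      {x : Config | x k l + x (k + 1) l + x k (l + 1) = 0}) ∩ {x : Config | x 0 0 = 1} := by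
    ext x
    simp only [Yset, threeDot, Set.mem_setOf_eq, Set.mem_inter_iff, Set.mem_iInter]
  rw [this]
  refine MeasurableSet.inter ?_ (measurableSet_coord 0 0 1)
  apply MeasurableSet.iInter; intro k
  apply MeasurableSet.iInter; intro l
  exact (((measurable_eval k l).add (measurable_eval (k+1) l)).add
    (measurable_eval k (l+1))) (MeasurableSet.singleton 0)

lemma measurable_sig_iter (p : ℕ) : Measurable (sig^[p]) :=
  measurable_sig.iterate p

lemma measurableSet_comp (k l : ℤ) :
    MeasurableSet {x : Config | shift k l x ∈ sigComp x} := by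
  have : {x : Config | shift k l x ∈ sigComp x} =
      (⋃ (k' : ℤ) (l' : ℤ), {x : Config | shift k l x = shift k' l' x}) ∩
      (shift k l ⁻¹' Yset) ∩
      ⋃ (p : ℕ) (q : ℕ), {x : Config | sig^[p] x = sig^[q] (shift k l x)} := by
    ext x
    simp only [sigComp, Set.mem_setOf_eq, Set.mem_inter_iff, Set.mem_iUnion,
      Set.mem_preimage]
    tauto
  rw [this]
  refine MeasurableSet.inter (MeasurableSet.inter ?_ ?_) ?_
  · apply MeasurableSet.iUnion; intro k'
    apply MeasurableSet.iUnion; intro l'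
    exact measurableSet_eqfun (measurable_shift k l) (measurable_shift k' l')
  · exact measurableSet_Yset.preimage (measurable_shift k l)
  · apply MeasurableSet.iUnion; intro p
    apply MeasurableSet.iUnion; intro q
    exact measurableSet_eqfun (measurable_sig_iter p)
      ((measurable_sig_iter q).comp (measurable_shift k l))

lemma measurableSet_Eset : MeasurableSet Eset := by
  have : Eset = Yset ∩ ⋂ (k : ℤ) (l : ℤ),
      {x : Config | shift k l x ∈ sigComp x → shift k l x ≠ x →
        (0 < k + l ∨ (k + l = 0 ∧ 0 ≤ l))} := by
    ext x
    simp only [Eset, Set.mem_setOf_eq, Set.mem_inter_iff, Set.mem_iInter]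
  rw [this]
  refine measurableSet_Yset.inter ?_
  apply MeasurableSet.iInter; intro k
  apply MeasurableSet.iInter; intro l
  by_cases hC : (0 < k + l ∨ (k + l = 0 ∧ 0 ≤ l))
  · have : {x : Config | shift k l x ∈ sigComp x → shift k l x ≠ x →
        (0 < k + l ∨ (k + l = 0 ∧ 0 ≤ l))} = Set.univ := by
      ext x; simp [hC]
    rw [this]; exact MeasurableSet.univ
  · have : {x : Config | shift k l x ∈ sigComp x → shift k l x ≠ x →
        (0 < k + l ∨ (k + l = 0 ∧ 0 ≤ l))} =
        {x : Config | shift k l x ∈ sigComp x}ᶜ ∪ {x : Config | shift k l x = x} := by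
      ext x
      simp only [Set.mem_setOf_eq, Set.mem_union, Set.mem_compl_iff]
      constructor
      · intro h
        by_cases h1 : shift k l x ∈ sigComp x
        · right
          by_contra h2
          exact hC (h h1 h2)
        · left; exact h1
      · intro h h1 h2
        rcases h with h | h
        · exact absurd h1 h
        · exact absurd h h2
    rw [this]
    exact (measurableSet_comp k l).compl.union
      (measurableSet_eqfun (measurable_shift k l) measurable_id)

section MP
variable {μ : Measure Config}

lemma mp_inv {f g : Config → Config} (hf : MeasurePreserving f μ μ) (hg : Measurable g)
    (h1 : g ∘ f = id) : MeasurePreserving g μ μ := by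
  refine ⟨hg, ?_⟩
  calc μ.map g = (μ.map f).map g := by rw [hf.map_eq]
  _ = μ.map (g ∘ f) := Measure.map_map hg hf.measurable
  _ = μ := by rw [h1, Measure.map_id]

lemma shift_mp (hT : MeasurePreserving Tm μ μ) (hS : MeasurePreserving Sm μ μ)
    (k l : ℤ) : MeasurePreserving (shift k l) μ μ := by
  have hTinv : MeasurePreserving (shift (-1) 0) μ μ := by
    apply mp_inv hT (measurable_shift (-1) 0)
    funext x; show shift (-1) 0 (shift 1 0 x) = x
    rw [shift_shift]; norm_num; exact shift_zero x
  have hSinv : MeasurePreserving (shift 0 (-1)) μ μ := by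
    apply mp_inv hS (measurable_shift 0 (-1))
    funext x; show shift 0 (-1) (shift 0 1 x) = x
    rw [shift_shift]; norm_num; exact shift_zero x
  have hid : MeasurePreserving (shift 0 0) μ μ := by
    have : shift (0:ℤ) (0:ℤ) = (id : Config → Config) := funext shift_zero
    rw [this]; exact MeasurePreserving.id μ
  have hH : ∀ k : ℤ, MeasurePreserving (shift k 0) μ μ := by
    intro k
    induction k using Int.induction_on with
    | zero => exact hid
    | succ k ih =>
      have : shift ((k:ℤ) + 1) 0 = shift k 0 ∘ shift 1 0 := by
        funext x; show shift (k+1) 0 x = shift k 0 (shift 1 0 x)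
        rw [shift_shift]; norm_num
      rw [this]; exact ih.comp hT
    | pred k ih =>
      have : shift (-(k:ℤ) - 1) 0 = shift (-k) 0 ∘ shift (-1) 0 := by
        funext x; show shift (-k-1) 0 x = shift (-k) 0 (shift (-1) 0 x)
        rw [shift_shift]; norm_num; congr 1
      rw [this]; exact ih.comp hTinv
  have hV : ∀ l : ℤ, MeasurePreserving (shift 0 l) μ μ := by
    intro l
    induction l using Int.induction_on with
    | zero => exact hid
    | succ l ih =>
      have : shift 0 ((l:ℤ) + 1) = shift 0 l ∘ shift 0 1 := by
        funext x; show shift 0 (l+1) x = shift 0 l (shift 0 1 x)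
        rw [shift_shift]; norm_num
      rw [this]; exact ih.comp hS
    | pred l ih =>
      have : shift 0 (-(l:ℤ) - 1) = shift 0 (-l) ∘ shift 0 (-1) := by
        funext x; show shift 0 (-l-1) x = shift 0 (-l) (shift 0 (-1) x)
        rw [shift_shift]; norm_num; congr 1
      rw [this]; exact ih.comp hSinv
  have : shift k l = shift 0 l ∘ shift k 0 := by
    funext x; show shift k l x = shift 0 l (shift k 0 x)
    rw [shift_shift]; norm_num
  rw [this]; exact (hV l).comp (hH k)

end MP

/-- trajectory displacement of the sigma-iterates -/
def traj (y : Config) : ℕ → ℤ × ℤ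
  | 0 => (0, 0)
  | n + 1 => if (sig^[n] y) 1 0 = 1 then ((traj y n).1 + 1, (traj y n).2)
      else ((traj y n).1, (traj y n).2 + 1)

lemma traj_spec {y : Config} (hy : y ∈ Yset) (n : ℕ) :
    0 ≤ (traj y n).1 ∧ 0 ≤ (traj y n).2 ∧ (traj y n).1 + (traj y n).2 = n ∧
    sig^[n] y = shift (traj y n).1 (traj y n).2 y := by
  induction n with
  | zero =>
    have e : traj y 0 = (0, 0) := rfl
    rw [e]
    exact ⟨le_refl _, le_refl _, by norm_num, by simpa using (shift_zero y).symm⟩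
  | succ n ih =>
    obtain ⟨h1, h2, h3, h4⟩ := ih
    have hYn : sig^[n] y ∈ Yset := (sig_iter_shift hy n).1
    rw [Function.iterate_succ_apply']
    by_cases hc : (sig^[n] y) 1 0 = 1
    · have e : traj y (n + 1) = ((traj y n).1 + 1, (traj y n).2) := by
        simp [traj, hc]
      rw [e, sig_eq_T hc, h4, shift_shift]
      refine ⟨by simp; omega, by simpa using h2, by push_cast; push_cast at h3; omega, ?_⟩
      simp only
      congr 1 <;> ring
    · have e : traj y (n + 1) = ((traj y n).1, (traj y n).2 + 1) := by
        simp [traj, hc]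
      rw [e, sig_eq_S hc, h4, shift_shift]
      refine ⟨by simpa using h1, by simp; omega, by push_cast; push_cast at h3; omega, ?_⟩
      simp only
      congr 1 <;> ring

open scoped Classical in
lemma count_bound (x : Config) (n : ℕ) :
    (((Finset.range n) ×ˢ (Finset.range n)).filter
      (fun p : ℕ × ℕ => shift p.1 p.2 x ∈ Eset)).card ≤ 2 * n + 1 := by
  classical
  set F := ((Finset.range n) ×ˢ (Finset.range n)).filter
      (fun p : ℕ × ℕ => shift p.1 p.2 x ∈ Eset) with hF
  have hmem : ∀ p ∈ F, (p.1 < n ∧ p.2 < n) ∧ shift p.1 p.2 x ∈ Eset := by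
    intro p hp
    rw [hF, Finset.mem_filter] at hp
    refine ⟨?_, hp.2⟩
    have := hp.1
    rw [Finset.mem_product, Finset.mem_range, Finset.mem_range] at this
    exact this
  set f : ℕ × ℕ → ℤ := fun p =>
    (p.1 : ℤ) + (traj (shift p.1 p.2 x) (2 * n - 2 - (p.1 + p.2))).1 with hf
  -- key fact for members
  have key : ∀ p ∈ F, ∃ a b : ℤ, 0 ≤ a ∧ 0 ≤ b ∧
      f p = (p.1 : ℤ) + a ∧ ((p.1 : ℤ) + a) + ((p.2 : ℤ) + b) = 2 * n - 2 ∧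
      sig^[2 * n - 2 - (p.1 + p.2)] (shift p.1 p.2 x) = shift ((p.1:ℤ) + a) ((p.2:ℤ) + b) x := by
    intro p hp
    obtain ⟨⟨hp1, hp2⟩, hpE⟩ := hmem p hp
    set m : ℕ := 2 * n - 2 - (p.1 + p.2) with hm
    have hYp : shift p.1 p.2 x ∈ Yset := hpE.1
    obtain ⟨h1, h2, h3, h4⟩ := traj_spec hYp m
    set a := (traj (shift p.1 p.2 x) m).1
    set b := (traj (shift p.1 p.2 x) m).2
    refine ⟨a, b, h1, h2, rfl, ?_, ?_⟩
    · have hmz : a + b = 2 * (n:ℤ) - 2 - ((p.1:ℤ) + (p.2:ℤ)) := by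
        rw [h3, hm]; omega
      omega
    · rw [h4, shift_shift]
      congr 1 <;> ring
  -- the map lands in Icc 0 (2n)
  have hmaps : ∀ p ∈ F, f p ∈ Finset.Icc (0 : ℤ) (2 * n) := by
    intro p hp
    obtain ⟨a, b, ha, hb, hfp, hsum, _⟩ := key p hp
    rw [Finset.mem_Icc, hfp]
    constructor
    · positivity
    · have : (0:ℤ) ≤ (p.2 : ℤ) + b := by positivity
      omega
  -- injectivity
  have hinj : ∀ p ∈ F, ∀ p' ∈ F, f p = f p' → p = p' := by
    intro p hp p' hp' hff
    obtain ⟨⟨_, _⟩, hpE⟩ := hmem p hp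
    obtain ⟨⟨_, _⟩, hpE'⟩ := hmem p' hp'
    obtain ⟨a, b, ha, hb, hfp, hsum, hiter⟩ := key p hp
    obtain ⟨a', b', ha', hb', hfp', hsum', hiter'⟩ := key p' hp'
    have hc1 : (p.1 : ℤ) + a = (p'.1 : ℤ) + a' := by rw [← hfp, ← hfp', hff]
    have hc2 : (p.2 : ℤ) + b = (p'.2 : ℤ) + b' := by omega
    have hmerge : sig^[2 * n - 2 - (p.1 + p.2)] (shift p.1 p.2 x)
        = sig^[2 * n - 2 - (p'.1 + p'.2)] (shift p'.1 p'.2 x) := by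
      rw [hiter, hiter', hc1, hc2]
    set y := shift (p.1 : ℤ) (p.2 : ℤ) x with hy
    set y' := shift (p'.1 : ℤ) (p'.2 : ℤ) x with hy'
    obtain ⟨D1, hD1⟩ : ∃ D : ℤ, D = (p'.1 : ℤ) - p.1 := ⟨_, rfl⟩
    obtain ⟨D2, hD2⟩ : ∃ D : ℤ, D = (p'.2 : ℤ) - p.2 := ⟨_, rfl⟩
    have hyy' : shift D1 D2 y = y' := by
      rw [hy, hy', shift_shift,
        show D1 + (p.1:ℤ) = (p'.1:ℤ) by omega,
        show D2 + (p.2:ℤ) = (p'.2:ℤ) by omega]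
    have hyy : shift (-D1) (-D2) y' = y := by
      rw [hy, hy', shift_shift,
        show -D1 + (p'.1:ℤ) = (p.1:ℤ) by omega,
        show -D2 + (p'.2:ℤ) = (p.2:ℤ) by omega]
    have hmem1 : shift D1 D2 y ∈ sigComp y := by
      rw [hyy']
      exact ⟨⟨D1, D2, hyy'.symm⟩, hpE'.1, _, _, hmerge⟩
    by_cases hne : y' = y
    · -- periodicity, use aperiodicity of y
      have hap := eset_aperiodic hpE
      have : shift D1 D2 y = y := by rw [hyy', hne]
      obtain ⟨e1, e2⟩ := hap D1 D2 this
      have : p.1 = p'.1 ∧ p.2 = p'.2 := by omega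
      exact Prod.ext this.1 this.2
    · exfalso
      have hmem2 : shift (-D1) (-D2) y' ∈ sigComp y' := by
        rw [hyy]
        exact ⟨⟨-D1, -D2, hyy.symm⟩, hpE.1, _, _, hmerge.symm⟩
      have d1 := hpE.2 D1 D2 hmem1 (by rw [hyy']; exact hne)
      have d2 := hpE'.2 (-D1) (-D2) hmem2 (by rw [hyy]; intro h; exact hne h.symm)
      have hzero : D1 = 0 ∧ D2 = 0 := by
        rcases d1 with h1 | ⟨h1a, h1b⟩ <;> rcases d2 with h2 | ⟨h2a, h2b⟩ <;> omega
      exact hne (by rw [← hyy', hzero.1, hzero.2, shift_zero])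
  have hcard := Finset.card_le_card_of_injOn f hmaps (fun p hp p' hp' h => hinj p hp p' hp' h)
  calc F.card ≤ (Finset.Icc (0 : ℤ) (2 * n)).card := hcard
  _ = 2 * n + 1 := by rw [Int.card_Icc]; omega

/-- A `ℤ²`-invariant ergodic probability measure on `X` gives measure zero
to the set of extremal points. -/
theorem stmt7 (μ : Measure Config) [IsProbabilityMeasure μ]
    (hX : μ Xset = 1)
    (hT : MeasurePreserving Tm μ μ) (hS : MeasurePreserving Sm μ μ)
    (herg : ∀ A : Set Config, MeasurableSet A → Tm ⁻¹' A = A → Sm ⁻¹' A = A →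
      μ A = 0 ∨ μ A = 1) :
    μ Eset = 0 := by
  classical
  have hmp : ∀ k l : ℤ, MeasurePreserving (shift k l) μ μ := shift_mp hT hS
  have hME : MeasurableSet Eset := measurableSet_Eset
  have key : ∀ n : ℕ, ((n : ℝ≥0∞) * n) * μ Eset ≤ 2 * n + 1 := by
    intro n
    set s := (Finset.range n) ×ˢ (Finset.range n) with hs
    have hAms : ∀ p : ℕ × ℕ, MeasurableSet (shift (p.1:ℤ) (p.2:ℤ) ⁻¹' Eset) :=
      fun p => hME.preimage (measurable_shift _ _)
    have h1 : ∀ p : ℕ × ℕ, μ (shift (p.1:ℤ) (p.2:ℤ) ⁻¹' Eset) = μ Eset := fun p =>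
      (hmp p.1 p.2).measure_preimage hME.nullMeasurableSet
    have h2 : ∑ p ∈ s, μ (shift (p.1:ℤ) (p.2:ℤ) ⁻¹' Eset)
        = ∫⁻ x, ∑ p ∈ s,
            (shift (p.1:ℤ) (p.2:ℤ) ⁻¹' Eset).indicator (fun _ => (1:ℝ≥0∞)) x ∂μ := by
      rw [MeasureTheory.lintegral_finset_sum]
      · refine Finset.sum_congr rfl fun p _ => ?_
        refine Eq.symm ?_
        rw [MeasureTheory.lintegral_indicator_const (hAms p) 1, one_mul]
      · intro p _
        exact measurable_const.indicator (hAms p)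
    have h3 : ∀ x : Config, ∑ p ∈ s,
        (shift (p.1:ℤ) (p.2:ℤ) ⁻¹' Eset).indicator (fun _ => (1:ℝ≥0∞)) x
        ≤ 2 * (n:ℝ≥0∞) + 1 := by
      intro x
      have e1 : ∑ p ∈ s,
          (shift (p.1:ℤ) (p.2:ℤ) ⁻¹' Eset).indicator (fun _ => (1:ℝ≥0∞)) x
          = ((s.filter (fun p : ℕ × ℕ => shift (p.1:ℤ) (p.2:ℤ) x ∈ Eset)).card : ℝ≥0∞) := by
        rw [Finset.card_filter]
        push_cast
        refine Finset.sum_congr rfl fun p _ => ?_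
        by_cases h : shift (p.1:ℤ) (p.2:ℤ) x ∈ Eset <;>
          simp [Set.indicator_apply, h]
      rw [e1]
      have hcb := count_bound x n
      calc ((s.filter (fun p : ℕ × ℕ => shift (p.1:ℤ) (p.2:ℤ) x ∈ Eset)).card : ℝ≥0∞)
          ≤ ((2 * n + 1 : ℕ) : ℝ≥0∞) := by exact_mod_cast hcb
      _ = 2 * (n:ℝ≥0∞) + 1 := by push_cast; ring
    have h4 : ∑ p ∈ s, μ (shift (p.1:ℤ) (p.2:ℤ) ⁻¹' Eset) ≤ 2 * n + 1 := by
      rw [h2]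
      calc ∫⁻ x, ∑ p ∈ s,
            (shift (p.1:ℤ) (p.2:ℤ) ⁻¹' Eset).indicator (fun _ => (1:ℝ≥0∞)) x ∂μ
          ≤ ∫⁻ _x, (2 * (n:ℝ≥0∞) + 1) ∂μ := MeasureTheory.lintegral_mono h3
      _ = 2 * (n:ℝ≥0∞) + 1 := by simp
    have h5 : ∑ p ∈ s, μ (shift (p.1:ℤ) (p.2:ℤ) ⁻¹' Eset) = ((n : ℝ≥0∞) * n) * μ Eset := by
      rw [Finset.sum_congr rfl fun p _ => h1 p, Finset.sum_const, hs,
        Finset.card_product, Finset.card_range, nsmul_eq_mul]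
      push_cast
      ring
    rw [h5] at h4
    exact h4
  -- conclude
  by_contra hε
  have hεtop : μ Eset ≠ ⊤ := measure_ne_top μ Eset
  obtain ⟨m, hm⟩ : ∃ m : ℕ, 3 / μ Eset < m := ENNReal.exists_nat_gt (by
    simp [ENNReal.div_eq_top, hε, hεtop])
  have h3lt : (3 : ℝ≥0∞) < m * μ Eset := by
    rwa [ENNReal.div_lt_iff (Or.inl hε) (Or.inl hεtop)] at hm
  have hm1 : 1 ≤ m := by
    by_contra h
    interval_cases m
    simp at h3lt
  obtain ⟨n, rfl⟩ : ∃ n : ℕ, m = n + 1 := ⟨m - 1, by omega⟩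
  have hkey := key (n + 1)
  have hle3 : ((n+1 : ℕ) : ℝ≥0∞) * μ Eset ≤ 3 := by
    have hne0 : ((n+1 : ℕ) : ℝ≥0∞) ≠ 0 := by
      simp
    have hnetop : ((n+1 : ℕ) : ℝ≥0∞) ≠ ⊤ := by
      simp
    have h6 : ((n+1 : ℕ) : ℝ≥0∞) * (((n+1 : ℕ) : ℝ≥0∞) * μ Eset)
        ≤ ((n+1 : ℕ) : ℝ≥0∞) * 3 := by
      calc ((n+1 : ℕ) : ℝ≥0∞) * (((n+1 : ℕ) : ℝ≥0∞) * μ Eset)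
          = (((n+1 : ℕ) : ℝ≥0∞) * ((n+1 : ℕ) : ℝ≥0∞)) * μ Eset := by ring
      _ ≤ 2 * ((n+1 : ℕ) : ℝ≥0∞) + 1 := by exact_mod_cast hkey
      _ ≤ ((n+1 : ℕ) : ℝ≥0∞) * 3 := by
          push_cast
          have : (1:ℝ≥0∞) ≤ (n:ℝ≥0∞) + 1 := le_add_self
          calc 2 * ((n:ℝ≥0∞) + 1) + 1 ≤ 2 * ((n:ℝ≥0∞)+1) + ((n:ℝ≥0∞)+1) := by
                exact add_le_add_right this _
          _ = ((n:ℝ≥0∞) + 1) * 3 := by ring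
    exact (ENNReal.mul_le_mul_iff_right hne0 hnetop).mp h6
  rw [show ((n+1 : ℕ) : ℝ≥0∞) * μ Eset = ((n+1:ℕ) : ℝ≥0∞) * μ Eset from rfl] at hle3
  have : (3:ℝ≥0∞) < 3 := lt_of_lt_of_le (by exact_mod_cast h3lt) hle3
  exact absurd this (lt_irrefl _)
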